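/- Consider the one-dimensional election with n voters at positions 1, 2, ..., n and m candidates at positions i·(n/m) for i = 1, ..., m (where m divides n and m ≥ 2k). For every committee T of k candidates, some voter's best-ranked committee member has rank at least m/(2k). -/

import Mathlib

open scoped Classical

/-- Distance between naturals, cast to ℝ. -/
lemma abs_cast_sub_eq (a b : ℕ) : |(a : ℝ) - b| = (((a - b) + (b - a) : ℕ) : ℝ) := by
  rcases le_total a b with h | h
  · rw [abs_sub_comm, abs_of_nonneg (sub_nonneg.mpr (Nat.cast_le.mpr h)),
      Nat.sub_eq_zero_of_le h]
    push_cast [Nat.cast_sub h]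
    ring
  · rw [abs_of_nonneg (sub_nonneg.mpr (Nat.cast_le.mpr h)),
      Nat.sub_eq_zero_of_le h]
    push_cast [Nat.cast_sub h]
    ring

/-- One-dimensional election with `n` voters at positions `1, …, n` and
`m` candidates at positions `i·(n/m)` for `i = 1, …, m`, where `m ∣ n`, `n > 0` and
`m ≥ 2k`. For every committee `T` of `k` candidates, some voter's best-ranked
committee member has rank at least `m/(2k)` (rank via the count of strictly closer
candidates). -/
theorem one_dim_lower_bound (n m k : ℕ) (hn : 0 < n) (hdvd : m ∣ n) (hk : 1 ≤ k)
    (hmk : 2 * k ≤ m) (T : Finset (Fin m)) (hT : T.card = k) :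
    ∃ v : Fin n, ∀ i ∈ T,
      (m : ℝ) / (2 * k) ≤
        ((Finset.univ.filter fun j : Fin m =>
          |((v : ℝ) + 1) - ((j : ℝ) + 1) * ((n : ℝ) / m)| <
            |((v : ℝ) + 1) - ((i : ℝ) + 1) * ((n : ℝ) / m)|).card : ℝ) + 1 := by
  classical
  have hm : 0 < m := by omega
  obtain ⟨d, hddef⟩ : ∃ d, d = n / m := ⟨_, rfl⟩
  have hnd : m * d = n := by rw [hddef]; exact Nat.mul_div_cancel' hdvd
  have hdpos : 0 < d := by rw [hddef]; exact Nat.div_pos (Nat.le_of_dvd hn hdvd) hm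
  have h2k : 0 < 2 * k := by omega
  obtain ⟨t, htdef⟩ : ∃ t, t = (m - 1) / (2 * k) := ⟨_, rfl⟩
  have h2kt : t * (2 * k) ≤ m - 1 := by rw [htdef]; exact Nat.div_mul_le_self _ _
  have hlt : m - 1 < (t + 1) * (2 * k) := by
    rw [htdef, ← Nat.div_lt_iff_lt_mul h2k]
    omega
  have hreal : (m : ℝ) / (2 * k) ≤ (t : ℝ) + 1 := by
    rw [div_le_iff₀ (by positivity)]
    have hmle : m ≤ (t + 1) * (2 * k) := by omega
    calc (m : ℝ) ≤ (((t + 1) * (2 * k) : ℕ) : ℝ) := by exact_mod_cast hmle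
      _ = ((t : ℝ) + 1) * (2 * k) := by push_cast; ring
  -- cast of n/m
  have hcast : (n : ℝ) / m = (d : ℝ) := by
    have hmn : (n : ℝ) = (m : ℝ) * d := by exact_mod_cast hnd.symm
    rw [hmn, mul_div_cancel_left₀]
    exact_mod_cast hm.ne'
  by_cases ht0 : t = 0
  · refine ⟨⟨0, hn⟩, fun i hi => ?_⟩
    have h1 : (m : ℝ) / (2 * k) ≤ 1 := by rw [ht0] at hreal; simpa using hreal
    have h2 : (0 : ℝ) ≤ ((Finset.univ.filter fun j : Fin m =>
          |(((⟨0, hn⟩ : Fin n) : ℝ) + 1) - ((j : ℝ) + 1) * ((n : ℝ) / m)| <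
            |(((⟨0, hn⟩ : Fin n) : ℝ) + 1) - ((i : ℝ) + 1) * ((n : ℝ) / m)|).card : ℝ) :=
      Nat.cast_nonneg _
    linarith
  have ht1 : 1 ≤ t := by omega
  have htm : t ≤ t * (2 * k) := Nat.le_mul_of_pos_right t h2k
  have htm' : t < m := by omega
  -- find a far-away candidate index j
  set B := Finset.univ.filter
      (fun j : Fin m => ∃ i ∈ T, (j : ℕ) - (i : ℕ) + ((i : ℕ) - (j : ℕ)) < t) with hB
  have hBcard : B.card < m := by
    have hsub : B ⊆ T.biUnion (fun i => Finset.univ.filter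
        (fun j : Fin m => (j : ℕ) - (i : ℕ) + ((i : ℕ) - (j : ℕ)) < t)) := by
      intro x hx
      simp only [hB, Finset.mem_filter, Finset.mem_univ, true_and] at hx
      obtain ⟨i, hiT, hdist⟩ := hx
      exact Finset.mem_biUnion.mpr ⟨i, hiT, by simp [hdist]⟩
    have hle : B.card ≤ ∑ i ∈ T, (Finset.univ.filter
        (fun j : Fin m => (j : ℕ) - (i : ℕ) + ((i : ℕ) - (j : ℕ)) < t)).card :=
      le_trans (Finset.card_le_card hsub) Finset.card_biUnion_le
    have heach : ∀ i ∈ T, (Finset.univ.filter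
        (fun j : Fin m => (j : ℕ) - (i : ℕ) + ((i : ℕ) - (j : ℕ)) < t)).card ≤ 2 * t - 1 := by
      intro i _
      have hc : (Finset.univ.filter
          (fun j : Fin m => (j : ℕ) - (i : ℕ) + ((i : ℕ) - (j : ℕ)) < t)).card
          ≤ (Finset.Ico ((i : ℕ) + 1 - t) ((i : ℕ) + t)).card := by
        apply Finset.card_le_card_of_injOn (fun j : Fin m => (j : ℕ))
        · intro x hx
          simp only [Finset.mem_coe, Finset.mem_filter, Finset.mem_univ, true_and] at hx
          simp only [Finset.mem_coe, Finset.mem_Ico]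
          omega
        · intro x _ y _ h
          exact Fin.ext h
      rw [Nat.card_Ico] at hc
      omega
    have hsum : B.card ≤ k * (2 * t - 1) := by
      calc B.card ≤ _ := hle
        _ ≤ ∑ _i ∈ T, (2 * t - 1) := Finset.sum_le_sum heach
        _ = k * (2 * t - 1) := by rw [Finset.sum_const, hT, smul_eq_mul]
    have e1 : k * (2 * t - 1) + k = k * (2 * t) := by
      rw [← Nat.mul_succ]; congr 1; omega
    have e2 : k * (2 * t) = t * (2 * k) := by ring
    omega
  obtain ⟨j, hjB⟩ : ∃ j : Fin m, j ∉ B := by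
    by_contra h
    push_neg at h
    have hcc : (Finset.univ : Finset (Fin m)).card ≤ B.card :=
      Finset.card_le_card (fun x _ => h x)
    rw [Finset.card_univ, Fintype.card_fin] at hcc
    omega
  have hjfar : ∀ i ∈ T, t ≤ (j : ℕ) - (i : ℕ) + ((i : ℕ) - (j : ℕ)) := by
    intro i hi
    by_contra h
    apply hjB
    rw [hB]
    simp only [Finset.mem_filter, Finset.mem_univ, true_and]
    exact ⟨i, hi, by omega⟩
  -- the voter at the candidate j's position
  have hjm : (j : ℕ) < m := j.isLt
  have hjd : ((j : ℕ) + 1) * d ≤ n := by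
    calc ((j : ℕ) + 1) * d ≤ m * d := Nat.mul_le_mul_right d (by omega)
      _ = n := hnd
  have hjd1 : 1 ≤ ((j : ℕ) + 1) * d := Nat.mul_pos (by omega) hdpos
  set v : Fin n := ⟨((j : ℕ) + 1) * d - 1, by omega⟩ with hv
  have hvval : (v : ℕ) = ((j : ℕ) + 1) * d - 1 := rfl
  have h1 : ((v : ℕ) : ℝ) + 1 = ((j : ℝ) + 1) * (d : ℝ) := by
    have h2' : ((j : ℕ) + 1) * d - 1 + 1 = ((j : ℕ) + 1) * d := by omega
    calc ((v : ℕ) : ℝ) + 1 = (((v : ℕ) + 1 : ℕ) : ℝ) := by push_cast; ring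
      _ = ((((j : ℕ) + 1) * d : ℕ) : ℝ) := by rw [hvval, h2']
      _ = ((j : ℝ) + 1) * (d : ℝ) := by push_cast; ring
  have key : ∀ c : Fin m, |((v : ℝ) + 1) - ((c : ℝ) + 1) * ((n : ℝ) / m)|
      = (((j : ℕ) - (c : ℕ) + ((c : ℕ) - (j : ℕ)) : ℕ) : ℝ) * (d : ℝ) := by
    intro c
    rw [hcast, h1]
    have hr : ((j : ℝ) + 1) * (d : ℝ) - ((c : ℝ) + 1) * (d : ℝ)
        = ((j : ℝ) - (c : ℝ)) * d := by ring
    rw [hr, abs_mul, abs_of_nonneg (by positivity : (0 : ℝ) ≤ (d : ℝ)),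
      abs_cast_sub_eq]
  refine ⟨v, fun i hi => ?_⟩
  have hfar := hjfar i hi
  obtain ⟨a, ha1, ha2, ha3⟩ : ∃ a, a ≤ (j : ℕ) ∧ a + t ≤ m ∧ (j : ℕ) < a + t := by
    rcases le_total (j : ℕ) (m - t) with h | h
    · exact ⟨(j : ℕ), le_rfl, by omega, by omega⟩
    · exact ⟨m - t, by omega, by omega, by omega⟩
  have hcount : t ≤ (Finset.univ.filter fun c : Fin m =>
      |((v : ℝ) + 1) - ((c : ℝ) + 1) * ((n : ℝ) / m)| <
        |((v : ℝ) + 1) - ((i : ℝ) + 1) * ((n : ℝ) / m)|).card := by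
    have hinj : (Finset.Ico a (a + t)).card ≤ (Finset.univ.filter fun c : Fin m =>
        |((v : ℝ) + 1) - ((c : ℝ) + 1) * ((n : ℝ) / m)| <
          |((v : ℝ) + 1) - ((i : ℝ) + 1) * ((n : ℝ) / m)|).card := by
      apply Finset.card_le_card_of_injOn (fun x : ℕ => (⟨x % m, Nat.mod_lt x hm⟩ : Fin m))
      · intro x hx
        simp only [Finset.mem_coe, Finset.mem_Ico] at hx
        have hxm : x < m := by omega
        have hmod : x % m = x := Nat.mod_eq_of_lt hxm
        simp only [Finset.mem_coe, Finset.mem_filter, Finset.mem_univ, true_and]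
        rw [key ⟨x % m, Nat.mod_lt x hm⟩, key i]
        apply mul_lt_mul_of_pos_right
        · have hlt1 : ((j : ℕ) - (x % m) + ((x % m) - (j : ℕ)) : ℕ)
              < ((j : ℕ) - (i : ℕ) + ((i : ℕ) - (j : ℕ)) : ℕ) := by
            rw [hmod]; omega
          exact_mod_cast hlt1
        · exact_mod_cast hdpos
      · intro x hx y hy hxy
        simp only [Finset.coe_Ico, Set.mem_Ico] at hx hy
        have : x % m = y % m := congrArg Fin.val hxy
        rwa [Nat.mod_eq_of_lt (by omega), Nat.mod_eq_of_lt (by omega)] at this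
    rwa [Nat.card_Ico, Nat.add_sub_cancel_left] at hinj
  have hcast2 : (t : ℝ) ≤ ((Finset.univ.filter fun c : Fin m =>
      |((v : ℝ) + 1) - ((c : ℝ) + 1) * ((n : ℝ) / m)| <
        |((v : ℝ) + 1) - ((i : ℝ) + 1) * ((n : ℝ) / m)|).card : ℝ) := by
    exact_mod_cast hcount
  linarith
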